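/- Let a > b > 0, α = (a-b)/(a+b), and t₀ ∈ ℝ. Define θ(t) on the interval where |√(a²-b²)(t-t₀)/2| < π/2 by tan(θ(t)/2) = -√α tan(√(a²-b²)(t-t₀)/2) with θ(t₀) = 0. Then θ satisfies θ'(t) = b cos θ(t) - a. -/

import Mathlib

open Real

theorem theta_solves_ode (a b t₀ : ℝ) (hb : 0 < b) (hba : b < a) :
    let α : ℝ := (a - b) / (a + b)
    let θ : ℝ → ℝ := fun t =>
      2 * Real.arctan (-Real.sqrt α * Real.tan (Real.sqrt (a ^ 2 - b ^ 2) * (t - t₀) / 2))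
    θ t₀ = 0 ∧
    (∀ t, |Real.sqrt (a ^ 2 - b ^ 2) * (t - t₀) / 2| < Real.pi / 2 →
      Real.tan (θ t / 2) = -Real.sqrt α * Real.tan (Real.sqrt (a ^ 2 - b ^ 2) * (t - t₀) / 2)) ∧
    (∀ t, |Real.sqrt (a ^ 2 - b ^ 2) * (t - t₀) / 2| < Real.pi / 2 →
      HasDerivAt θ (b * Real.cos (θ t) - a) t) := by
  intro α θ
  have hab : (0:ℝ) < a + b := by linarith
  have hamb : (0:ℝ) < a - b := by linarith
  have hα : 0 ≤ α := le_of_lt (div_pos hamb hab)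
  set k := Real.sqrt α with hk
  set s := Real.sqrt (a ^ 2 - b ^ 2) with hs
  have hk2 : k ^ 2 = α := Real.sq_sqrt hα
  have hks : k * s = a - b := by
    rw [hk, hs, ← Real.sqrt_mul hα]
    have h1 : α * (a ^ 2 - b ^ 2) = (a - b) ^ 2 := by
      rw [div_mul_eq_mul_div, div_eq_iff hab.ne']
      ring
    rw [h1, Real.sqrt_sq hamb.le]
  refine ⟨?_, ?_, ?_⟩
  · simp [θ]
  · intro t ht
    simp only [θ]
    rw [mul_div_cancel_left₀ _ (two_ne_zero), Real.tan_arctan]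
  · intro t ht
    simp only [θ]
    set u : ℝ → ℝ := fun t => s * (t - t₀) / 2 with hu
    have hcos : Real.cos (u t) ≠ 0 := by
      refine ne_of_gt (Real.cos_pos_of_mem_Ioo ?_)
      rw [abs_lt] at ht
      exact ⟨ht.1, ht.2⟩
    have hdu : HasDerivAt u (s / 2) t := by
      have := (((hasDerivAt_id t).sub_const t₀).const_mul s).div_const 2
      simpa using this
    have hdt : HasDerivAt (fun t => Real.tan (u t)) (1 / Real.cos (u t) ^ 2 * (s / 2)) t :=
      (Real.hasDerivAt_tan hcos).comp t hdu
    have hdg : HasDerivAt (fun t => -k * Real.tan (u t))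
        (-k * (1 / Real.cos (u t) ^ 2 * (s / 2))) t := hdt.const_mul (-k)
    have hda : HasDerivAt (fun t => 2 * Real.arctan (-k * Real.tan (u t)))
        (2 * (1 / (1 + (-k * Real.tan (u t)) ^ 2) * (-k * (1 / Real.cos (u t) ^ 2 * (s / 2))))) t :=
      ((Real.hasDerivAt_arctan _).comp t hdg).const_mul 2
    convert hda using 1
    set T := Real.tan (u t) with hT
    have hsc := Real.sin_sq_add_cos_sq (u t)
    have htan1 : 1 / Real.cos (u t) ^ 2 = 1 + T ^ 2 := by
      rw [hT, Real.tan_eq_sin_div_cos, div_pow]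
      field_simp
      linarith [hsc]
    have hcosθ : Real.cos (2 * Real.arctan (-k * T)) = (1 - (k * T) ^ 2) / (1 + (k * T) ^ 2) := by
      have hpos : (0:ℝ) < 1 + (-k * T) ^ 2 := by positivity
      have hpos2 : (0:ℝ) < 1 + (k * T) ^ 2 := by positivity
      rw [Real.cos_two_mul, Real.cos_arctan]
      rw [div_pow, one_pow, Real.sq_sqrt (le_of_lt hpos)]
      field_simp
      ring
    rw [hcosθ, htan1]
    have h1 : (0:ℝ) < 1 + (k * T) ^ 2 := by positivity
    have hne1 : (1:ℝ) + (k * T) ^ 2 ≠ 0 := ne_of_gt h1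
    have hks2 : k ^ 2 * (a + b) = a - b := by
      rw [hk2]; exact div_mul_cancel₀ _ hab.ne'
    have hne : (1:ℝ) + (-k * T) ^ 2 = 1 + (k * T) ^ 2 := by ring
    rw [hne]
    field_simp
    linear_combination (1 + T ^ 2) * hks - T ^ 2 * hks2
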